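/- arXiv:1506.09112 — 3 statements merged into one kernel-verified Lean document; each statement's English description precedes it below -/
import Mathlib

section
/- Let G be a finite group with subgroups H, H', Γ, all sets equipped with counting measure normalized as indicated. For a function f : G → ℂ define Θ(f) = (1/|Γ∩H|)(1/|Γ∩H'|) Σ_{h∈H} Σ_{h'∈H'} Σ_{γ∈Γ} f(h'γh). For γ ∈ Γ let (H'×H)_γ = {(h',h) : h'γh⁻¹ = γ} and I([γ], f) = Σ over a set of representatives of (H'×H)_γ\(H'×H) of f(h'γh⁻¹). Then Θ(f) = Σ_{[γ] ∈ (H'∩Γ)\Γ/(Γ∩H)} vol((H'∩Γ × H∩Γ)_γ \ (H'×H)_γ) · I([γ], f), where the volume factor equals the index [(H'×H)_γ : (H'∩Γ × H∩Γ)_γ]. -/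
open scoped BigOperators Classical

/-- The stabilizer `(H'×H)_γ = {(h',h) ∈ H'×H : h'γh⁻¹ = γ}` as a finset. -/
noncomputable def relStab {G : Type*} [Group G] [Fintype G]
    (H' H : Subgroup G) (γ : G) : Finset (G × G) :=
  Finset.univ.filter fun p => p.1 ∈ H' ∧ p.2 ∈ H ∧ p.1 * γ * p.2⁻¹ = γ

/-- The orbital integral `I([γ],f)`, a sum of `f(h'γh⁻¹)` over a set of
representatives of `(H'×H)_γ \ (H'×H)`, realized as the full sum divided by
the cardinality of the stabilizer. -/
noncomputable def orbitalIntegral {G : Type*} [Group G] [Fintype G]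
    (H' H : Subgroup G) (γ : G) (f : G → ℂ) : ℂ :=
  ((relStab H' H γ).card : ℂ)⁻¹ *
    ∑ h' : H', ∑ h : H, f ((h' : G) * γ * (h : G)⁻¹)

lemma relStab_card_ne_zero {G : Type*} [Group G] [Fintype G]
    (H' H : Subgroup G) (γ : G) : (relStab H' H γ).card ≠ 0 :=
  Finset.card_ne_zero_of_mem (show ((1 : G), (1 : G)) ∈ relStab H' H γ by
    simp [relStab, one_mem])

/-- Geometric expansion of the distribution `Θ(f)` for finite groups:
`Θ(f) = Σ_{[γ]} vol((H'∩Γ × H∩Γ)_γ \ (H'×H)_γ) · I([γ],f)`, the sum running over a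
set `R` of representatives of the double cosets `(H'∩Γ)\Γ/(Γ∩H)`, the volume factor
being the index `[(H'×H)_γ : (H'∩Γ × H∩Γ)_γ]`. -/
theorem geometric_side_finite_groups {G : Type*} [Group G] [Fintype G]
    (H H' Γ : Subgroup G) (f : G → ℂ) (R : Finset G)
    (hRΓ : ∀ r ∈ R, r ∈ Γ)
    (hR : ∀ γ ∈ Γ, ∃! r, r ∈ R ∧ ∃ a ∈ H' ⊓ Γ, ∃ b ∈ Γ ⊓ H, γ = a * r * b) :
    (Nat.card (H ⊓ Γ : Subgroup G) : ℂ)⁻¹ * (Nat.card (H' ⊓ Γ : Subgroup G) : ℂ)⁻¹ *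
      ∑ h : H, ∑ h' : H', ∑ γ : Γ, f ((h' : G) * (γ : G) * (h : G)) =
    ∑ r ∈ R,
      (((relStab H' H r).card : ℂ) / ((relStab (H' ⊓ Γ) (H ⊓ Γ) r).card : ℂ)) *
        orbitalIntegral H' H r f := by
  classical
  set g : G → ℂ := fun x => ∑ h' : H', ∑ h : H, f ((h' : G) * x * (h : G)⁻¹) with hg
  -- choose representatives
  choose ρ hρR a ha b hb hab using fun γ : Γ => (hR γ γ.2).exists
  have huniq : ∀ (γ : Γ) (r : G), r ∈ R →
      (∃ a ∈ H' ⊓ Γ, ∃ b ∈ Γ ⊓ H, (γ : G) = a * r * b) → r = ρ γ := by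
    intro γ r hr hrep
    exact (hR γ γ.2).unique ⟨hr, hrep⟩ ⟨hρR γ, a γ, ha γ, b γ, hb γ, hab γ⟩
  -- invariance of g
  have keyH' : ∀ (x c : G), c ∈ H' → g (c * x) = g x := by
    intro x c hc
    simp only [hg]
    refine Fintype.sum_equiv (Equiv.mulRight (⟨c, hc⟩ : H')) _ _ fun h' => ?_
    refine Finset.sum_congr rfl fun h _ => ?_
    congr 1
    simp only [Equiv.coe_mulRight]
    push_cast
    group
  have keyH : ∀ (x c : G), c ∈ H → g (x * c) = g x := by
    intro x c hc
    simp only [hg]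
    refine Finset.sum_congr rfl fun h' _ => ?_
    refine Fintype.sum_equiv (Equiv.mulRight (⟨c, hc⟩ : H)⁻¹) _ _ fun h => ?_
    congr 1
    simp only [Equiv.coe_mulRight]
    push_cast
    group
  have gconst : ∀ γ : Γ, g (γ : G) = g (ρ γ) := by
    intro γ
    rw [hab γ, keyH (a γ * ρ γ) (b γ) (Subgroup.mem_inf.mp (hb γ)).2,
      keyH' (ρ γ) (a γ) (Subgroup.mem_inf.mp (ha γ)).1]
  -- step 1: reorganize the triple sum
  have step1 : (∑ h : H, ∑ h' : H', ∑ γ : Γ, f ((h' : G) * (γ : G) * (h : G)))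
      = ∑ γ : Γ, g (γ : G) := by
    calc ∑ h : H, ∑ h' : H', ∑ γ : Γ, f ((h' : G) * (γ : G) * (h : G))
        = ∑ h' : H', ∑ h : H, ∑ γ : Γ, f ((h' : G) * (γ : G) * (h : G)) :=
          Finset.sum_comm
      _ = ∑ h' : H', ∑ γ : Γ, ∑ h : H, f ((h' : G) * (γ : G) * (h : G)) :=
          Finset.sum_congr rfl fun _ _ => Finset.sum_comm
      _ = ∑ γ : Γ, ∑ h' : H', ∑ h : H, f ((h' : G) * (γ : G) * (h : G)) :=
          Finset.sum_comm
      _ = ∑ γ : Γ, g (γ : G) := by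
          refine Finset.sum_congr rfl fun γ _ => Finset.sum_congr rfl fun h' _ => ?_
          exact Fintype.sum_equiv (Equiv.inv H) _ _ fun h => by simp
  -- step 2: fiber decomposition over R
  have step2 : (∑ γ : Γ, g (γ : G)) =
      ∑ r ∈ R, ((Finset.univ.filter fun γ : Γ => ρ γ = r).card : ℂ) * g r := by
    rw [← Finset.sum_fiberwise_of_maps_to (g := ρ) (fun γ _ => hρR γ)
      (fun γ : Γ => g (γ : G))]
    refine Finset.sum_congr rfl fun r hr => ?_
    have hconst : ∀ γ ∈ Finset.univ.filter (fun γ : Γ => ρ γ = r),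
        g (γ : G) = g r := by
      intro γ hγ
      rw [gconst γ, (Finset.mem_filter.mp hγ).2]
    rw [Finset.sum_congr rfl hconst, Finset.sum_const, nsmul_eq_mul]
  -- step 3: fiber cardinality
  have card_eq : ∀ r ∈ R,
      (Finset.univ.filter fun γ : Γ => ρ γ = r).card *
        (relStab (H' ⊓ Γ) (H ⊓ Γ) r).card
      = Nat.card (H' ⊓ Γ : Subgroup G) * Nat.card (H ⊓ Γ : Subgroup G) := by
    intro r hrR
    have hrΓ : r ∈ Γ := hRΓ r hrR
    set Φ : ↥(H' ⊓ Γ) × ↥(Γ ⊓ H) → Γ := fun p =>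
      ⟨(p.1 : G) * r * (p.2 : G),
        mul_mem (mul_mem (Subgroup.mem_inf.mp p.1.2).2 hrΓ)
          (Subgroup.mem_inf.mp p.2.2).1⟩ with hΦ
    have hmaps : ∀ p : ↥(H' ⊓ Γ) × ↥(Γ ⊓ H), p ∈ (Finset.univ : Finset _) →
        Φ p ∈ Finset.univ.filter fun γ : Γ => ρ γ = r := by
      intro p _
      simp only [Finset.mem_filter, Finset.mem_univ, true_and]
      exact (huniq (Φ p) r hrR ⟨p.1, p.1.2, p.2, p.2.2, rfl⟩).symm
    have hcards := Finset.card_eq_sum_card_fiberwise hmaps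
    have hfib : ∀ γ ∈ Finset.univ.filter (fun γ : Γ => ρ γ = r),
        (Finset.univ.filter fun p => Φ p = γ).card
          = (relStab (H' ⊓ Γ) (H ⊓ Γ) r).card := by
      intro γ hγ
      have hργ : ρ γ = r := (Finset.mem_filter.mp hγ).2
      have hγrep : (γ : G) = a γ * r * b γ := by rw [hab γ, hργ]
      refine Finset.card_bij
        (fun p _ => ((a γ)⁻¹ * (p.1 : G), b γ * (p.2 : G)⁻¹)) ?_ ?_ ?_
      · intro p hp
        have hp' : (p.1 : G) * r * (p.2 : G) = a γ * r * b γ := by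
          rw [← hγrep]
          exact congrArg Subtype.val (Finset.mem_filter.mp hp).2
        simp only [relStab, Finset.mem_filter, Finset.mem_univ, true_and]
        refine ⟨mul_mem (inv_mem (ha γ)) p.1.2, ?_, ?_⟩
        · refine Subgroup.mem_inf.mpr
            ⟨mul_mem (Subgroup.mem_inf.mp (hb γ)).2
              (inv_mem (Subgroup.mem_inf.mp p.2.2).2),
             mul_mem (Subgroup.mem_inf.mp (hb γ)).1
              (inv_mem (Subgroup.mem_inf.mp p.2.2).1)⟩
        · have : (a γ)⁻¹ * (p.1 : G) * r * (b γ * (p.2 : G)⁻¹)⁻¹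
              = (a γ)⁻¹ * ((p.1 : G) * r * (p.2 : G)) * (b γ)⁻¹ := by group
          rw [this, hp']
          group
      · intro p hp q hq hpq
        obtain ⟨h1, h2⟩ := Prod.mk.injEq .. ▸ hpq
        refine Prod.ext (Subtype.ext (mul_left_cancel h1)) (Subtype.ext ?_)
        exact inv_injective (mul_left_cancel h2)
      · rintro ⟨x, y⟩ hxy
        simp only [relStab, Finset.mem_filter, Finset.mem_univ, true_and] at hxy
        obtain ⟨hx, hy, hxyr⟩ := hxy
        refine ⟨(⟨a γ * x, mul_mem (ha γ) hx⟩,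
          ⟨y⁻¹ * b γ, mul_mem
            (inv_mem (Subgroup.mem_inf.mpr
              ⟨(Subgroup.mem_inf.mp hy).2, (Subgroup.mem_inf.mp hy).1⟩))
            (hb γ)⟩), Finset.mem_filter.mpr ⟨Finset.mem_univ _, ?_⟩, ?_⟩
        · refine Subtype.ext ?_
          show a γ * x * r * (y⁻¹ * b γ) = (γ : G)
          rw [hγrep]
          calc a γ * x * r * (y⁻¹ * b γ) = a γ * (x * r * y⁻¹) * b γ := by group
            _ = a γ * r * b γ := by rw [hxyr]
        · simp only [Prod.mk.injEq]
          constructor <;> group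
    rw [Finset.sum_congr rfl hfib, Finset.sum_const, smul_eq_mul] at hcards
    have huniv : (Finset.univ : Finset (↥(H' ⊓ Γ) × ↥(Γ ⊓ H))).card
        = Nat.card (H' ⊓ Γ : Subgroup G) * Nat.card (H ⊓ Γ : Subgroup G) := by
      rw [Finset.card_univ, Fintype.card_prod, Nat.card_eq_fintype_card,
        Nat.card_eq_fintype_card]
      congr 1
      rw [inf_comm]
    rw [huniv] at hcards
    exact hcards.symm
  -- assemble
  rw [step1, step2, Finset.mul_sum]
  refine Finset.sum_congr rfl fun r hr => ?_
  have hc := card_eq r hr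
  have hS : ((relStab H' H r).card : ℂ) ≠ 0 :=
    Nat.cast_ne_zero.mpr (relStab_card_ne_zero H' H r)
  have hS' : ((relStab (H' ⊓ Γ) (H ⊓ Γ) r).card : ℂ) ≠ 0 :=
    Nat.cast_ne_zero.mpr (relStab_card_ne_zero (H' ⊓ Γ) (H ⊓ Γ) r)
  have hcH : (Nat.card (H ⊓ Γ : Subgroup G) : ℂ) ≠ 0 :=
    Nat.cast_ne_zero.mpr Nat.card_pos.ne'
  have hcH' : (Nat.card (H' ⊓ Γ : Subgroup G) : ℂ) ≠ 0 :=
    Nat.cast_ne_zero.mpr Nat.card_pos.ne'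
  have hcc : (((Finset.univ.filter fun γ : Γ => ρ γ = r).card : ℂ)) *
      ((relStab (H' ⊓ Γ) (H ⊓ Γ) r).card : ℂ)
      = (Nat.card (H' ⊓ Γ : Subgroup G) : ℂ) * (Nat.card (H ⊓ Γ : Subgroup G) : ℂ) := by
    exact_mod_cast congrArg (Nat.cast : ℕ → ℂ) hc
  show _ = _ * (((relStab H' H r).card : ℂ)⁻¹ * g r)
  set t : ℂ := ((Finset.univ.filter fun γ : Γ => ρ γ = r).card : ℂ) with hts
  set S : ℂ := ((relStab H' H r).card : ℂ) with hSs
  set S' : ℂ := ((relStab (H' ⊓ Γ) (H ⊓ Γ) r).card : ℂ) with hS's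
  set cH : ℂ := (Nat.card (H ⊓ Γ : Subgroup G) : ℂ) with hcHs
  set cH' : ℂ := (Nat.card (H' ⊓ Γ : Subgroup G) : ℂ) with hcH's
  field_simp
  linear_combination g r * hcc
end

section
/- Let (αᵢ)_{i∈I} be a finite basis of a real inner product space V such that (αᵢ, αⱼ) ≤ 0 for all i ≠ j (an obtuse basis), and let (ω̃ᵢ) be the dual basis, i.e. (αᵢ, ω̃ⱼ) = δᵢⱼ. Suppose Y¹, Y² ∈ V satisfy (αᵢ, Yʲ) > 0 for all i ∈ I and j ∈ {1,2}. Define Z ∈ V by the conditions (ω̃ᵢ, Z) = min((ω̃ᵢ, Y¹), (ω̃ᵢ, Y²)) for all i. Then (αᵢ, Z) > 0 for all i ∈ I. (Here one uses that (αᵢ,Yʲ) > 0 for all i implies (ω̃ᵢ, Yʲ) > 0 for all i.) -/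
open scoped RealInnerProductSpace BigOperators

/-- Let `(αᵢ) = (b i)` be an obtuse basis of a real inner product space, `(ω i)` the dual
basis (`⟪b i, ω j⟫ = δᵢⱼ`). If `⟪b i, Y¹⟫ > 0` and `⟪b i, Y²⟫ > 0` for all `i`, and
`Z = Σᵢ min(⟪ω i, Y¹⟫, ⟪ω i, Y²⟫) • b i` (equivalently `⟪ω i, Z⟫ = min(...)` for all `i`),
then `⟪b i, Z⟫ > 0` for all `i`. -/
theorem obtuse_basis_min_positive {ι V : Type*} [Fintype ι] [DecidableEq ι]
    [NormedAddCommGroup V] [InnerProductSpace ℝ V]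
    (b : Module.Basis ι ℝ V) (obtuse : ∀ i j, i ≠ j → ⟪b i, b j⟫ ≤ 0)
    (ω : ι → V) (hdual : ∀ i j, ⟪b i, ω j⟫ = if i = j then 1 else 0)
    (Y1 Y2 : V) (h1 : ∀ i, 0 < ⟪b i, Y1⟫) (h2 : ∀ i, 0 < ⟪b i, Y2⟫)
    (Z : V) (hZ : Z = ∑ i, min ⟪ω i, Y1⟫ ⟪ω i, Y2⟫ • b i) :
    ∀ i, 0 < ⟪b i, Z⟫ := by
  have key : ∀ (Y : V) (j : ι), ⟪ω j, Y⟫ = b.repr Y j := by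
    intro Y j
    conv_lhs => rw [← b.sum_repr Y]
    rw [inner_sum]
    have hk : ∀ k, ⟪ω j, b k⟫ = if k = j then 1 else 0 := by
      intro k; rw [real_inner_comm]; exact hdual k j
    simp [real_inner_smul_right, hk]
  have hrep : ∀ Y : V, Y = ∑ j, ⟪ω j, Y⟫ • b j := by
    intro Y
    conv_lhs => rw [← b.sum_repr Y]
    exact Finset.sum_congr rfl fun j _ => by rw [key]
  intro i
  have expand : ∀ (c : ι → ℝ), ⟪b i, ∑ j, c j • b j⟫ = ∑ j, c j * ⟪b i, b j⟫ := by
    intro c; rw [inner_sum]; simp [real_inner_smul_right]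
  rcases le_total ⟪ω i, Y1⟫ ⟪ω i, Y2⟫ with h | h
  · have hle : ⟪b i, Y1⟫ ≤ ⟪b i, Z⟫ := by
      conv_lhs => rw [hrep Y1]
      rw [hZ, expand, expand]
      apply Finset.sum_le_sum
      intro j _
      by_cases hj : j = i
      · subst hj; rw [min_eq_left h]
      · exact mul_le_mul_of_nonpos_right (min_le_left _ _) (obtuse i j (Ne.symm hj))
    exact lt_of_lt_of_le (h1 i) hle
  · have hle : ⟪b i, Y2⟫ ≤ ⟪b i, Z⟫ := by
      conv_lhs => rw [hrep Y2]
      rw [hZ, expand, expand]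
      apply Finset.sum_le_sum
      intro j _
      by_cases hj : j = i
      · subst hj; rw [min_eq_right h]
      · exact mul_le_mul_of_nonpos_right (min_le_right _ _) (obtuse i j (Ne.symm hj))
    exact lt_of_lt_of_le (h2 i) hle
end

section
/- Let (αᵢ)_{i∈I} be a finite basis of a real inner product space V with (αᵢ, αⱼ) ≤ 0 for i ≠ j, and Gram matrix positive definite. If Y ∈ V satisfies (αᵢ, Y) > 0 for all i, then writing Y = Σᵢ yᵢ αᵢ, all coefficients yᵢ are strictly positive. -/
open scoped RealInnerProductSpace

/-- If `(b i)` is an obtuse basis of a real inner product space (pairwise inner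
products `≤ 0`) and `Y` satisfies `⟪b i, Y⟫ > 0` for all `i`, then all coordinates of
`Y` in the basis `b` are strictly positive. -/
theorem obtuse_basis_positive_coords {ι V : Type*} [Fintype ι]
    [NormedAddCommGroup V] [InnerProductSpace ℝ V]
    (b : Module.Basis ι ℝ V) (obtuse : ∀ i j, i ≠ j → ⟪b i, b j⟫ ≤ 0)
    (Y : V) (hY : ∀ i, 0 < ⟪b i, Y⟫) :
    ∀ i, 0 < b.repr Y i := by
  classical
  set y : ι → ℝ := fun i => b.repr Y i with hy
  have hsum : ∑ i, y i • b i = Y := b.sum_repr Y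
  -- Step 1: all coordinates are nonnegative.
  have hnonneg : ∀ i, 0 ≤ y i := by
    by_contra h
    push_neg at h
    obtain ⟨i₀, hi₀⟩ := h
    set N : Finset ι := Finset.univ.filter (fun i => y i < 0) with hN
    have hi₀N : i₀ ∈ N := by simp [hN, hi₀]
    set Z : V := ∑ i ∈ N, (-(y i)) • b i with hZ
    have hYZ : Y + Z = ∑ j ∈ Nᶜ, y j • b j := by
      rw [hZ, ← hsum, ← Finset.sum_add_sum_compl N (fun i => y i • b i)]
      abel_nf
      rw [add_comm, add_assoc]
      have : ∑ i ∈ N, -(y i) • b i + ∑ i ∈ N, y i • b i = 0 := by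
        rw [← Finset.sum_add_distrib]
        simp
      simp [this]
    have hZY : 0 < ⟪Z, Y⟫ := by
      rw [hZ, sum_inner]
      apply Finset.sum_pos
      · intro i hi
        rw [hN, Finset.mem_filter] at hi
        rw [real_inner_smul_left]
        exact mul_pos (by linarith [hi.2]) (hY i)
      · exact ⟨i₀, hi₀N⟩
    have hZYZ : ⟪Z, Y + Z⟫ ≤ 0 := by
      rw [hYZ, hZ, sum_inner]
      apply Finset.sum_nonpos
      intro i hi
      rw [real_inner_smul_left, inner_sum]
      apply mul_nonpos_of_nonneg_of_nonpos
      · rw [hN, Finset.mem_filter] at hi; linarith [hi.2]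
      apply Finset.sum_nonpos
      intro j hj
      rw [real_inner_smul_right]
      have hij : i ≠ j := by
        rintro rfl
        exact (Finset.mem_compl.mp hj) hi
      have hjnn : 0 ≤ y j := by
        have := Finset.mem_compl.mp hj
        rw [hN, Finset.mem_filter] at this
        push_neg at this
        exact this (Finset.mem_univ j)
      exact mul_nonpos_of_nonneg_of_nonpos hjnn (obtuse i j hij)
    have : ⟪Z, Z⟫ < 0 := by
      have := inner_add_right (𝕜 := ℝ) Z Y Z
      linarith
    linarith [real_inner_self_nonneg (x := Z)]
  -- Step 2: strict positivity.
  intro i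
  rcases lt_or_eq_of_le (hnonneg i) with h | h
  · exact h
  exfalso
  have : ⟪b i, Y⟫ ≤ 0 := by
    rw [← hsum, inner_sum]
    apply Finset.sum_nonpos
    intro j _
    rw [real_inner_smul_right]
    rcases eq_or_ne j i with rfl | hij
    · rw [← h]; simp
    · exact mul_nonpos_of_nonneg_of_nonpos (hnonneg j) (obtuse i j (Ne.symm hij))
  linarith [hY i]
end
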